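/- For every d ∈ ℕ and real r > 1, the number of lattice points n ∈ ℤ_{≥0}^d with ∏_{j=1}^d (1 + n_j) < r, denoted a(d, r), satisfies a(d, r) ≍_d r (log r)^{d−1}; that is, there exist constants c_1(d), c_2(d) > 0 such that c_1(d) r (log r)^{d−1} ≤ a(d, r) ≤ c_2(d) r (log r)^{d−1} for all sufficiently large r. -/

import Mathlib

open Real Finset

namespace Stmt4Aux

noncomputable def F : (d : ℕ) → ℝ → Finset (Fin d → ℕ)
  | 0, r => if 1 < r then {fun i => i.elim0} else ∅
  | d + 1, r => (Finset.range ⌈r⌉₊).biUnion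
      (fun m => (F d (r / (1 + m))).image (Fin.cons m))

lemma one_le_prod_real {d : ℕ} (n : Fin d → ℕ) : (1:ℝ) ≤ ∏ j, (1 + (n j : ℝ)) := by
  calc (1:ℝ) = ∏ _j : Fin d, 1 := by simp
    _ ≤ ∏ j, (1 + (n j : ℝ)) :=
      Finset.prod_le_prod (fun i _ => by norm_num)
        (fun i _ => le_add_of_nonneg_right (Nat.cast_nonneg _))

lemma mem_F : ∀ (d : ℕ) (r : ℝ) (n : Fin d → ℕ),
    n ∈ F d r ↔ (∏ j, (1 + (n j : ℝ))) < r := by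
  intro d
  induction d with
  | zero =>
    intro r n
    simp only [F]
    rw [show (∏ j, (1 + (n j : ℝ))) = 1 by simp]
    split_ifs with h
    · simp only [Finset.mem_singleton, h, iff_true]
      exact funext fun i => i.elim0
    · simp [h]
  | succ d ih =>
    intro r n
    simp only [F, Finset.mem_biUnion, Finset.mem_range, Finset.mem_image]
    constructor
    · rintro ⟨m, hm, y, hy, rfl⟩
      rw [Fin.prod_univ_succ]
      simp only [Fin.cons_zero, Fin.cons_succ]
      have h1 : (0:ℝ) < 1 + m := by positivity
      have hyp := (ih _ y).mp hy
      calc (1 + (m:ℝ)) * ∏ j, (1 + (y j : ℝ))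
          < (1 + (m:ℝ)) * (r / (1 + m)) := by
            exact mul_lt_mul_of_pos_left hyp h1
        _ = r := by field_simp
    · intro hn
      rw [Fin.prod_univ_succ] at hn
      have h1 : (0:ℝ) < 1 + (n 0 : ℝ) := by positivity
      have htail : (1:ℝ) ≤ ∏ j : Fin d, (1 + (n j.succ : ℝ)) :=
        one_le_prod_real (fun j => n j.succ)
      have hn0 : ((n 0 : ℝ)) < r := by nlinarith
      refine ⟨n 0, Nat.lt_ceil.mpr hn0, Fin.tail n, ?_, Fin.cons_self_tail n⟩
      rw [ih]
      have : ∏ j : Fin d, (1 + (Fin.tail n j : ℝ)) = ∏ j : Fin d, (1 + (n j.succ : ℝ)) := rfl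
      rw [this, lt_div_iff₀ h1, mul_comm]
      exact hn

lemma F_eq_empty {d : ℕ} {r : ℝ} (h : r ≤ 1) : F d r = ∅ := by
  rw [Finset.eq_empty_iff_forall_notMem]
  intro n hn
  rw [mem_F] at hn
  have : (1:ℝ) ≤ ∏ j, (1 + (n j : ℝ)) := one_le_prod_real n
  linarith

lemma card_F_succ (d : ℕ) (r : ℝ) :
    (F (d+1) r).card = ∑ m ∈ Finset.range ⌈r⌉₊, (F d (r / (1 + m))).card := by
  show ((Finset.range ⌈r⌉₊).biUnion _).card = _
  rw [Finset.card_biUnion]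
  · refine Finset.sum_congr rfl fun m _ => Finset.card_image_of_injective _ ?_
    intro y y' h
    funext j
    have := congrFun h j.succ
    simpa using this
  · intro m _ m' _ hmm'
    rw [Function.onFun, Finset.disjoint_left]
    rintro a ha ha'
    rw [Finset.mem_image] at ha ha'
    obtain ⟨y, _, rfl⟩ := ha
    obtain ⟨y', _, he⟩ := ha'
    apply hmm'
    have h0 := congrFun he 0
    simpa using h0.symm

lemma card_F_zero (r : ℝ) : (F 0 r).card = if 1 < r then 1 else 0 := by
  simp only [F]; split_ifs <;> simp


lemma harmonic_cast (N : ℕ) : ((harmonic N : ℚ) : ℝ) = ∑ m ∈ Finset.range N, (1 + (m:ℝ))⁻¹ := by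
  rw [harmonic]
  push_cast
  exact Finset.sum_congr rfl fun m _ => by ring_nf

lemma sum_inv_le (N : ℕ) : ∑ m ∈ Finset.range N, (1 + (m:ℝ))⁻¹ ≤ 1 + Real.log N := by
  rw [← harmonic_cast]
  exact_mod_cast harmonic_le_one_add_log N

lemma log_le_sum_inv (N : ℕ) : Real.log (N + 1) ≤ ∑ m ∈ Finset.range N, (1 + (m:ℝ))⁻¹ := by
  rw [← harmonic_cast]
  have := log_add_one_le_harmonic N
  push_cast at this ⊢
  exact this


lemma card_F_one_le (r : ℝ) (hr : 0 ≤ r) : ((F 1 r).card : ℝ) ≤ r + 1 := by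
  have h : (F 1 r).card ≤ ⌈r⌉₊ := by
    calc (F 1 r).card = ∑ m ∈ Finset.range ⌈r⌉₊, (F 0 (r/(1+m))).card := card_F_succ 0 r
      _ ≤ ∑ _m ∈ Finset.range ⌈r⌉₊, 1 :=
          Finset.sum_le_sum (fun m _ => by rw [card_F_zero]; split_ifs <;> simp)
      _ = ⌈r⌉₊ := by simp
  calc ((F 1 r).card : ℝ) ≤ ⌈r⌉₊ := by exact_mod_cast h
    _ ≤ r + 1 := le_of_lt (Nat.ceil_lt_add_one hr)

lemma upper : ∀ d : ℕ, 1 ≤ d → ∃ c : ℝ, 0 < c ∧ ∀ r : ℝ, 1 ≤ r →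
    ((F d r).card : ℝ) ≤ c * r * (1 + Real.log r) ^ (d - 1) := by
  intro d hd
  induction d, hd using Nat.le_induction with
  | base =>
    refine ⟨2, by norm_num, fun r hr => ?_⟩
    have := card_F_one_le r (by linarith)
    simpa using this.trans (by linarith)
  | succ d hd ih =>
    obtain ⟨c, hc, hC⟩ := ih
    refine ⟨2 * c, by positivity, fun r hr => ?_⟩
    have hr0 : (0:ℝ) < r := by linarith
    have hlog : 0 ≤ Real.log r := Real.log_nonneg hr
    set X := 1 + Real.log r with hX
    have hX0 : 0 < X := by simp [hX]; linarith
    have key : ∀ m : ℕ, ((F d (r / (1 + m))).card : ℝ)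
        ≤ c * X ^ (d-1) * r * (1 + (m:ℝ))⁻¹ := by
      intro m
      have hm0 : (0:ℝ) < 1 + m := by positivity
      by_cases h : 1 ≤ r / (1 + m)
      · have h1 := hC _ h
        have hlog2 : Real.log (r / (1+m)) ≤ Real.log r :=
          Real.log_le_log (by positivity)
            (div_le_self (le_of_lt hr0) (by simp [le_add_iff_nonneg_right]))
        have hb : (1 + Real.log (r/(1+m)))^(d-1) ≤ X^(d-1) :=
          pow_le_pow_left₀ (by nlinarith [Real.log_nonneg h]) (by simp [hX]; linarith) _
        calc ((F d (r / (1 + m))).card : ℝ)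
            ≤ c * (r/(1+m)) * (1 + Real.log (r/(1+m)))^(d-1) := h1
          _ ≤ c * (r/(1+m)) * X^(d-1) := by
              apply mul_le_mul_of_nonneg_left hb (by positivity)
          _ = c * X^(d-1) * r * (1+(m:ℝ))⁻¹ := by field_simp
      · push_neg at h
        rw [F_eq_empty (le_of_lt h)]
        simp only [Finset.card_empty, Nat.cast_zero]
        positivity
    have hN1 : 1 ≤ ⌈r⌉₊ := Nat.one_le_ceil_iff.mpr hr0
    have hsum : ∑ m ∈ Finset.range ⌈r⌉₊, (1 + (m:ℝ))⁻¹ ≤ 2 * X := by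
      refine (sum_inv_le _).trans ?_
      have h1 : (⌈r⌉₊ : ℝ) ≤ 2 * r := by
        have := Nat.ceil_lt_add_one (le_of_lt hr0)
        linarith
      have h2 : Real.log ⌈r⌉₊ ≤ Real.log (2*r) :=
        Real.log_le_log (by exact_mod_cast hN1) h1
      have h3 : Real.log (2*r) = Real.log 2 + Real.log r :=
        Real.log_mul (by norm_num) (ne_of_gt hr0)
      have h4 : Real.log 2 ≤ 1 := by
        have := Real.log_le_sub_one_of_pos (by norm_num : (0:ℝ) < 2); linarith
      simp only [hX]; linarith
    have hpow : X^(d-1) * X = X^d := by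
      rw [← pow_succ, Nat.sub_add_cancel hd]
    calc ((F (d+1) r).card : ℝ)
        = ∑ m ∈ Finset.range ⌈r⌉₊, ((F d (r/(1+m))).card : ℝ) := by
          rw [card_F_succ]; push_cast; rfl
      _ ≤ ∑ m ∈ Finset.range ⌈r⌉₊, c * X^(d-1) * r * (1+(m:ℝ))⁻¹ :=
          Finset.sum_le_sum (fun m _ => key m)
      _ = c * X^(d-1) * r * ∑ m ∈ Finset.range ⌈r⌉₊, (1+(m:ℝ))⁻¹ :=
          (Finset.mul_sum _ _ _).symm
      _ ≤ c * X^(d-1) * r * (2 * X) := by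
          apply mul_le_mul_of_nonneg_left hsum (by positivity)
      _ = 2 * c * r * (X^(d-1) * X) := by ring
      _ = 2 * c * r * X ^ ((d+1)-1) := by rw [hpow, Nat.add_sub_cancel]


lemma card_F_one_ge (r : ℝ) (hr : 4 ≤ r) : r / 2 ≤ ((F 1 r).card : ℝ) := by
  set M := ⌊r⌋₊ - 1 with hM
  have hr0 : (0:ℝ) ≤ r := by linarith
  have hfl : 4 ≤ ⌊r⌋₊ := Nat.le_floor (by exact_mod_cast hr)
  have hMc : (M:ℝ) = (⌊r⌋₊:ℝ) - 1 := by
    rw [hM, Nat.cast_sub (by omega)]; norm_num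
  have hMN : M ≤ ⌈r⌉₊ := le_trans (Nat.sub_le _ _) (Nat.floor_le_ceil r)
  have hterm : ∀ m ∈ Finset.range M, 1 ≤ (F 0 (r/(1+m))).card := by
    intro m hm
    rw [Finset.mem_range] at hm
    have h1 : (m:ℝ) + 1 ≤ (M:ℝ) := by exact_mod_cast hm
    have h2 : (⌊r⌋₊:ℝ) ≤ r := Nat.floor_le hr0
    have hmr : (m:ℝ) + 1 < r := by
      rw [hMc] at h1; linarith
    rw [card_F_zero, if_pos]
    have hm0 : (0:ℝ) < 1 + m := by positivity
    rw [lt_div_iff₀ hm0]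
    linarith
  have hcard : M ≤ (F 1 r).card := by
    calc M = ∑ _m ∈ Finset.range M, 1 := by simp
      _ ≤ ∑ m ∈ Finset.range M, (F 0 (r/(1+m))).card := Finset.sum_le_sum hterm
      _ ≤ ∑ m ∈ Finset.range ⌈r⌉₊, (F 0 (r/(1+m))).card :=
          Finset.sum_le_sum_of_subset (Finset.range_subset_range.mpr hMN)
      _ = (F 1 r).card := (card_F_succ 0 r).symm
  have h3 : r < ⌊r⌋₊ + 1 := Nat.lt_floor_add_one r
  have h4 : (M:ℝ) ≤ (F 1 r).card := by exact_mod_cast hcard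
  rw [hMc] at h4
  linarith

lemma lower : ∀ d : ℕ, 1 ≤ d → ∃ c : ℝ, 0 < c ∧ ∃ R : ℝ, 4 ≤ R ∧ ∀ r : ℝ, R ≤ r →
    c * r * (Real.log r) ^ (d - 1) ≤ ((F d r).card : ℝ) := by
  intro d hd
  induction d, hd using Nat.le_induction with
  | base =>
    refine ⟨1/2, by norm_num, 4, le_refl _, fun r hr => ?_⟩
    have := card_F_one_ge r hr
    simp only [Nat.sub_self, pow_zero, mul_one]
    linarith
  | succ d hd ih =>
    obtain ⟨c, hc, R, hR, hL⟩ := ih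
    refine ⟨c / 2^d, by positivity, R^2, by nlinarith, fun r hr => ?_⟩
    have hr16 : 16 ≤ r := le_trans (by nlinarith) hr
    have hr1 : (1:ℝ) ≤ r := by linarith
    have hr0 : (0:ℝ) < r := by linarith
    have hsq : R ≤ Real.sqrt r := by
      rw [show R = Real.sqrt (R^2) from (Real.sqrt_sq (by linarith)).symm]
      exact Real.sqrt_le_sqrt hr
    have hs1 : (1:ℝ) ≤ Real.sqrt r := by linarith
    have hs0 : (0:ℝ) < Real.sqrt r := by linarith
    set M := ⌊Real.sqrt r⌋₊ with hM
    have hsr : Real.sqrt r ≤ r := (Real.sqrt_le_left (le_of_lt hr0)).mpr (by nlinarith)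
    have hMN : M ≤ ⌈r⌉₊ :=
      le_trans (Nat.floor_le_floor hsr) (Nat.floor_le_ceil r)
    set L2 := Real.log (Real.sqrt r) with hL2def
    have hL2 : L2 = Real.log r / 2 := Real.log_sqrt (le_of_lt hr0)
    have hls0 : 0 ≤ L2 := Real.log_nonneg hs1
    have key : ∀ m ∈ Finset.range M,
        c * L2^(d-1) * r * (1+(m:ℝ))⁻¹ ≤ ((F d (r/(1+m))).card : ℝ) := by
      intro m hm
      rw [Finset.mem_range] at hm
      have hm0 : (0:ℝ) < 1 + m := by positivity
      have hmM : (1:ℝ) + m ≤ Real.sqrt r := by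
        have h1 : (m:ℝ) + 1 ≤ (M:ℝ) := by exact_mod_cast hm
        have h2 : (M:ℝ) ≤ Real.sqrt r := Nat.floor_le (le_of_lt hs0)
        linarith
      have hdiv : Real.sqrt r ≤ r / (1+m) := by
        rw [le_div_iff₀ hm0]
        calc Real.sqrt r * (1+(m:ℝ)) ≤ Real.sqrt r * Real.sqrt r :=
              mul_le_mul_of_nonneg_left hmM (le_of_lt hs0)
          _ = r := Real.mul_self_sqrt (le_of_lt hr0)
      have h1 := hL _ (le_trans hsq hdiv)
      have hlogs : L2 ≤ Real.log (r/(1+m)) := Real.log_le_log hs0 hdiv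
      calc c * L2^(d-1) * r * (1+(m:ℝ))⁻¹
          = c * (r/(1+m)) * L2^(d-1) := by field_simp
        _ ≤ c * (r/(1+m)) * (Real.log (r/(1+m)))^(d-1) :=
            mul_le_mul_of_nonneg_left (pow_le_pow_left₀ hls0 hlogs _) (by positivity)
        _ ≤ _ := h1
    have hsum : L2 ≤ ∑ m ∈ Finset.range M, (1+(m:ℝ))⁻¹ := by
      refine le_trans ?_ (log_le_sum_inv M)
      apply Real.log_le_log hs0
      have := Nat.lt_floor_add_one (Real.sqrt r)
      linarith
    have e1 : L2^(d-1) * L2 = L2^d := by rw [← pow_succ, Nat.sub_add_cancel hd]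
    calc c/2^d * r * (Real.log r)^((d+1)-1)
        = c * r * L2^d := by
          rw [hL2, Nat.add_sub_cancel, div_pow]; ring
      _ = c * L2^(d-1) * r * L2 := by rw [← e1]; ring
      _ ≤ c * L2^(d-1) * r * ∑ m ∈ Finset.range M, (1+(m:ℝ))⁻¹ :=
          mul_le_mul_of_nonneg_left hsum (by positivity)
      _ = ∑ m ∈ Finset.range M, c * L2^(d-1) * r * (1+(m:ℝ))⁻¹ := Finset.mul_sum _ _ _
      _ ≤ ∑ m ∈ Finset.range M, ((F d (r/(1+m))).card : ℝ) := Finset.sum_le_sum key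
      _ ≤ ∑ m ∈ Finset.range ⌈r⌉₊, ((F d (r/(1+m))).card : ℝ) :=
          Finset.sum_le_sum_of_subset_of_nonneg (Finset.range_subset_range.mpr hMN)
            (fun m _ _ => by positivity)
      _ = ((F (d+1) r).card : ℝ) := by rw [card_F_succ]; push_cast; rfl


end Stmt4Aux

open Stmt4Aux in
/-- The number `a(d,r)` of lattice points `n ∈ ℤ_{≥0}^d` with `∏_j (1+n_j) < r` satisfies
`a(d,r) ≍_d r (log r)^{d−1}` for all sufficiently large `r`. -/
theorem stmt4 (d : ℕ) (hd : 0 < d) :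
    ∃ c₁ c₂ : ℝ, 0 < c₁ ∧ 0 < c₂ ∧ ∃ R : ℝ, 1 < R ∧ ∀ r : ℝ, R ≤ r →
      c₁ * r * (Real.log r) ^ (d - 1) ≤
        (Set.ncard {n : Fin d → ℕ | (∏ j, (1 + (n j : ℝ))) < r} : ℝ) ∧
      (Set.ncard {n : Fin d → ℕ | (∏ j, (1 + (n j : ℝ))) < r} : ℝ) ≤
        c₂ * r * (Real.log r) ^ (d - 1) := by
  obtain ⟨cu, hcu, hU⟩ := upper d hd
  obtain ⟨cl, hcl, R₀, hR₀4, hLo⟩ := lower d hd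
  refine ⟨cl, cu * 2 ^ (d - 1), hcl, by positivity, max R₀ 3,
    lt_of_lt_of_le (by norm_num) (le_max_right _ _), fun r hr => ?_⟩
  have hrR : R₀ ≤ r := le_trans (le_max_left _ _) hr
  have hr3 : (3:ℝ) ≤ r := le_trans (le_max_right _ _) hr
  have hr1 : (1:ℝ) ≤ r := by linarith
  have hr0 : (0:ℝ) < r := by linarith
  have hncard : (Set.ncard {n : Fin d → ℕ | (∏ j, (1 + (n j : ℝ))) < r}) = (F d r).card := by
    have hset : {n : Fin d → ℕ | (∏ j, (1 + (n j : ℝ))) < r} = ↑(F d r) := by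
      ext n
      simp only [Set.mem_setOf_eq, Finset.coe_sort_coe, Finset.mem_coe, mem_F]
    rw [hset, Set.ncard_coe_finset]
  rw [hncard]
  constructor
  · exact hLo r hrR
  · have h1log : 1 ≤ Real.log r := by
      rw [show (1:ℝ) = Real.log (Real.exp 1) from (Real.log_exp 1).symm]
      apply Real.log_le_log (Real.exp_pos 1)
      have := Real.exp_one_lt_d9
      linarith
    have hpow : (1 + Real.log r) ^ (d-1) ≤ 2 ^ (d-1) * (Real.log r) ^ (d-1) := by
      rw [← mul_pow]
      exact pow_le_pow_left₀ (by linarith) (by linarith) _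
    calc ((F d r).card : ℝ) ≤ cu * r * (1 + Real.log r) ^ (d-1) := hU r hr1
      _ ≤ cu * r * (2 ^ (d-1) * (Real.log r) ^ (d-1)) :=
          mul_le_mul_of_nonneg_left hpow (by positivity)
      _ = cu * 2 ^ (d-1) * r * (Real.log r) ^ (d-1) := by ring
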